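/- Suppose the dispersion and survival matrices satisfy D S = S. Then the partial next-generation matrix is block diagonal, W = ⊕_{i=1}^n N^i, where N^i := F^i (I − S^i)^{-1} is the local dispersion-free next-generation matrix of patch i, and the newborn submatrix W̄ is the diagonal matrix diag(R₀^1,…,R₀^n), where R₀^i := (N^i)_{11}. -/

import Mathlib

open Matrix BigOperators

/-- Spectral radius of a real square matrix: the maximum modulus of its complex
eigenvalues (elements of the spectrum of the matrix viewed over `ℂ`). -/
noncomputable def specRad {ι : Type*} [Fintype ι] [DecidableEq ι]
    (M : Matrix ι ι ℝ) : ℝ :=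
  sSup {r : ℝ | ∃ μ : ℂ, μ ∈ spectrum ℂ (M.map Complex.ofReal) ∧ r = ‖μ‖}

/-- The induced `L¹` operator norm of a real matrix: the maximum absolute column sum. -/
noncomputable def colNorm {ι : Type*} [Fintype ι] (M : Matrix ι ι ℝ) : ℝ :=
  ⨆ q, ∑ p, |M p q|

/-- Local fecundity matrix: first row `(f 0, …, f (m-1))`, other rows zero. -/
def localF (m : ℕ) (f : Fin m → ℝ) : Matrix (Fin m) (Fin m) ℝ :=
  Matrix.of fun k' k => if (k' : ℕ) = 0 then f k else 0

/-- Local survival matrix: diagonal entries `sd k`, subdiagonal entries `ss k`,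
all other entries zero. -/
def localS (m : ℕ) (sd ss : Fin m → ℝ) : Matrix (Fin m) (Fin m) ℝ :=
  Matrix.of fun k' k =>
    if k' = k then sd k else if (k' : ℕ) = (k : ℕ) + 1 then ss k else 0

/-- Global (block-diagonal) fecundity matrix `F = ⊕ᵢ Fⁱ`, indexed by
(stage, patch) pairs. -/
def fecMat (m n : ℕ) (f : Fin m → Fin n → ℝ) :
    Matrix (Fin m × Fin n) (Fin m × Fin n) ℝ :=
  Matrix.of fun p q =>
    if p.2 = q.2 then localF m (fun k => f k q.2) p.1 q.1 else 0

/-- Global (block-diagonal) survival matrix `S = ⊕ᵢ Sⁱ`. -/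
def survMat (m n : ℕ) (sd ss : Fin m → Fin n → ℝ) :
    Matrix (Fin m × Fin n) (Fin m × Fin n) ℝ :=
  Matrix.of fun p q =>
    if p.2 = q.2 then localS m (fun k => sd k q.2) (fun k => ss k q.2) p.1 q.1 else 0

/-- Global dispersion matrix: the `(i,j)` patch block is `diag (d 0 i j, …, d (m-1) i j)`. -/
def dispMat (m n : ℕ) (d : Fin m → Fin n → Fin n → ℝ) :
    Matrix (Fin m × Fin n) (Fin m × Fin n) ℝ :=
  Matrix.of fun p q => if p.1 = q.1 then d q.1 p.2 q.2 else 0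

/-- Next-generation matrix `N = D F (I - D S)⁻¹`. -/
noncomputable def nextGen (m n : ℕ) (f : Fin m → Fin n → ℝ)
    (sd ss : Fin m → Fin n → ℝ) (d : Fin m → Fin n → Fin n → ℝ) :
    Matrix (Fin m × Fin n) (Fin m × Fin n) ℝ :=
  dispMat m n d * fecMat m n f * (1 - dispMat m n d * survMat m n sd ss)⁻¹

/-- Partial next-generation matrix `W = F (I - D S)⁻¹`. -/
noncomputable def partGen (m n : ℕ) (f : Fin m → Fin n → ℝ)
    (sd ss : Fin m → Fin n → ℝ) (d : Fin m → Fin n → Fin n → ℝ) :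
    Matrix (Fin m × Fin n) (Fin m × Fin n) ℝ :=
  fecMat m n f * (1 - dispMat m n d * survMat m n sd ss)⁻¹

/-- Newborn submatrix: keep only the rows and columns with stage index `0`
(the newborn indices). -/
def newbornSub {m n : ℕ} (hm : 0 < m)
    (B : Matrix (Fin m × Fin n) (Fin m × Fin n) ℝ) : Matrix (Fin n) (Fin n) ℝ :=
  Matrix.of fun i j => B (⟨0, hm⟩, i) (⟨0, hm⟩, j)

/-- The alternative net reproductive number `R̂₀ = max_{x ∈ 𝒳} ‖N x‖`, where `𝒳`
is the set of nonnegative `L¹`-unit vectors supported on the newborn indices. -/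
noncomputable def altR0 (m n : ℕ)
    (N : Matrix (Fin m × Fin n) (Fin m × Fin n) ℝ) : ℝ :=
  sSup {r : ℝ | ∃ x : Fin m × Fin n → ℝ, (∀ p, 0 ≤ x p) ∧ (∑ p, |x p|) = 1 ∧
    (∀ p : Fin m × Fin n, (p.1 : ℕ) ≠ 0 → x p = 0) ∧ r = ∑ p, |N.mulVec x p|}

theorem stmt10
    (m n : ℕ) (hm : 2 ≤ m) (hn : 1 ≤ n)
    (f : Fin m → Fin n → ℝ) (hf : ∀ k i, 0 ≤ f k i)
    (sd ss : Fin m → Fin n → ℝ)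
    (hsd : ∀ k i, 0 ≤ sd k i) (hss : ∀ k i, 0 ≤ ss k i)
    (hs1 : ∀ (k : Fin m) (i : Fin n),
      sd k i + (if (k : ℕ) + 1 < m then ss k i else 0) < 1)
    (d : Fin m → Fin n → Fin n → ℝ)
    (hd0 : ∀ k i j, 0 ≤ d k i j) (hd1 : ∀ k i j, d k i j ≤ 1)
    (hdsum : ∀ k j, ∑ i, d k i j = 1)
    (hDS : dispMat m n d * survMat m n sd ss = survMat m n sd ss) :
    (∀ p q : Fin m × Fin n,
        partGen m n f sd ss d p q =
          if p.2 = q.2 then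
            (localF m (fun k => f k q.2) *
              (1 - localS m (fun k => sd k q.2) (fun k => ss k q.2))⁻¹) p.1 q.1
          else 0) ∧
      newbornSub (show 0 < m by omega) (partGen m n f sd ss d) =
        Matrix.diagonal (fun i : Fin n =>
          (localF m (fun k => f k i) *
            (1 - localS m (fun k => sd k i) (fun k => ss k i))⁻¹)
            ⟨0, show 0 < m by omega⟩ ⟨0, show 0 < m by omega⟩) := by
  set Sb : Fin n → Matrix (Fin m) (Fin m) ℝ :=
    fun i => localS m (fun k => sd k i) (fun k => ss k i) with hSb
  set Fb : Fin n → Matrix (Fin m) (Fin m) ℝ :=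
    fun i => localF m (fun k => f k i) with hFb
  have hS : survMat m n sd ss = Matrix.blockDiagonal Sb := by
    ext ⟨p1, p2⟩ ⟨q1, q2⟩
    simp only [survMat, Matrix.of_apply, Matrix.blockDiagonal_apply']
    split_ifs with h
    · subst h; rfl
    · rfl
  have hF : fecMat m n f = Matrix.blockDiagonal Fb := by
    ext ⟨p1, p2⟩ ⟨q1, q2⟩
    simp only [fecMat, Matrix.of_apply, Matrix.blockDiagonal_apply']
    split_ifs with h
    · subst h; rfl
    · rfl
  -- each local 1 - Sb i is invertible
  have hdiag : ∀ (i : Fin n) (k : Fin m), (1 - Sb i) k k = 1 - sd k i := by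
    intro i k
    simp [hSb, localS, Matrix.one_apply]
  have hdet : ∀ i : Fin n, IsUnit (1 - Sb i).det := by
    intro i
    have htri : (1 - Sb i).BlockTriangular OrderDual.toDual := by
      intro a b hab
      have hab' : a < b := hab
      have h1 : a ≠ b := ne_of_lt hab'
      have h2 : (a : ℕ) ≠ (b : ℕ) + 1 := by omega
      simp [hSb, localS, Matrix.one_apply, h1, h2]
    rw [Matrix.det_of_lowerTriangular _ htri]
    rw [isUnit_iff_ne_zero]
    apply Finset.prod_ne_zero_iff.2
    intro k _
    rw [hdiag]
    have := hs1 k i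
    have h0 : (0:ℝ) ≤ (if (k : ℕ) + 1 < m then ss k i else 0) := by
      split_ifs
      exacts [hss k i, le_refl 0]
    have hlt : sd k i < 1 := by linarith
    exact ne_of_gt (by linarith)
  have hinv : (1 - Matrix.blockDiagonal Sb)⁻¹ =
      Matrix.blockDiagonal (fun i => (1 - Sb i)⁻¹) := by
    rw [show (1 : Matrix (Fin m × Fin n) (Fin m × Fin n) ℝ) =
        Matrix.blockDiagonal (1 : Fin n → Matrix (Fin m) (Fin m) ℝ) from
        (Matrix.blockDiagonal_one).symm, ← Matrix.blockDiagonal_sub]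
    apply Matrix.inv_eq_right_inv
    rw [← Matrix.blockDiagonal_mul]
    rw [show (fun i => ((1 : Fin n → Matrix (Fin m) (Fin m) ℝ) - Sb) i * (1 - Sb i)⁻¹) =
        (1 : Fin n → Matrix (Fin m) (Fin m) ℝ) from ?_, Matrix.blockDiagonal_one]
    funext i
    exact Matrix.mul_nonsing_inv _ (hdet i)
  have hW : partGen m n f sd ss d =
      Matrix.blockDiagonal (fun i => Fb i * (1 - Sb i)⁻¹) := by
    rw [partGen, hDS, hS, hF, hinv, Matrix.blockDiagonal_mul]
  have key : ∀ p q : Fin m × Fin n,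
      partGen m n f sd ss d p q =
        if p.2 = q.2 then
          (localF m (fun k => f k q.2) *
            (1 - localS m (fun k => sd k q.2) (fun k => ss k q.2))⁻¹) p.1 q.1
        else 0 := by
    rintro ⟨p1, p2⟩ ⟨q1, q2⟩
    rw [hW]
    simp only [Matrix.blockDiagonal_apply']
    split_ifs with h
    · subst h; rfl
    · rfl
  refine ⟨key, ?_⟩
  ext i j
  rw [newbornSub, Matrix.of_apply, key]
  simp only [Matrix.diagonal_apply]
  split_ifs with h
  · subst h; rfl
  · rfl
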